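/- arXiv:2210.10285 — 9 statements merged into one kernel-verified Lean document; each statement's English description precedes it below -/
import Mathlib

section
/- An inert subring of a unique factorization domain is a unique factorization domain. -/
/-- An inert subring of a unique factorization domain is a unique factorization domain. -/
theorem stmt_3 {A : Type*} [CommRing A] [IsDomain A] [UniqueFactorizationMonoid A]
    (B : Subring A)
    (hinert : ∀ f g : A, f ≠ 0 → g ≠ 0 → f * g ∈ B → f ∈ B ∧ g ∈ B) :
    UniqueFactorizationMonoid B := by
  -- units of A in B are units of B
  have hunit : ∀ x : B, IsUnit (x : A) → IsUnit x := by
    rintro ⟨x, hx⟩ ⟨u, hu⟩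
    have hu' : (u : A) = x := hu
    have hne : x ≠ 0 := by rintro rfl; exact u.ne_zero hu'
    have hinv : (↑u⁻¹ : A) ∈ B := by
      have hmem : x * ↑u⁻¹ ∈ B := by
        rw [← hu', Units.mul_inv]; exact B.one_mem
      exact (hinert x _ hne (Units.ne_zero _) hmem).2
    refine IsUnit.of_mul_eq_one (a := (⟨x, hx⟩ : B)) (⟨↑u⁻¹, hinv⟩ : B) ?_
    ext
    simp [← hu']
  -- primes of A in B are primes of B
  have hprime : ∀ p : B, Prime (p : A) → Prime p := by
    rintro ⟨p, hpB⟩ hp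
    refine ⟨by simpa [Subtype.ext_iff] using hp.ne_zero, ?_, ?_⟩
    · intro h
      exact hp.not_unit (h.map B.subtype)
    · rintro ⟨a, haB⟩ ⟨b, hbB⟩ ⟨⟨c, hcB⟩, hc⟩
      have hc' : a * b = p * c := congrArg Subtype.val hc
      rcases hp.2.2 a b ⟨c, hc'⟩ with ⟨d, hd⟩ | ⟨d, hd⟩
      · rcases eq_or_ne a 0 with rfl | ha0
        · exact Or.inl ⟨0, by ext; simp⟩
        · have hd0 : d ≠ 0 := by rintro rfl; simp at hd; exact ha0 hd
          have hdB : d ∈ B := (hinert p d hp.ne_zero hd0 (hd ▸ haB)).2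
          exact Or.inl ⟨⟨d, hdB⟩, by ext; exact hd⟩
      · rcases eq_or_ne b 0 with rfl | hb0
        · exact Or.inr ⟨0, by ext; simp⟩
        · have hd0 : d ≠ 0 := by rintro rfl; simp at hd; exact hb0 hd
          have hdB : d ∈ B := (hinert p d hp.ne_zero hd0 (hd ▸ hbB)).2
          exact Or.inr ⟨⟨d, hdB⟩, by ext; exact hd⟩
  -- a multiset with nonzero entries whose product is in B has all entries in B
  have hmult : ∀ s : Multiset A, (∀ x ∈ s, x ≠ 0) → s.prod ∈ B → ∀ x ∈ s, x ∈ B := by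
    intro s
    induction s using Multiset.induction with
    | empty => intro _ _ x hx; simp at hx
    | cons p t ih =>
      intro hne hprod x hx
      have hp0 : p ≠ 0 := hne p (Multiset.mem_cons_self p t)
      have ht0 : t.prod ≠ 0 :=
        Multiset.prod_ne_zero (fun h => hne 0 (Multiset.mem_cons_of_mem h) rfl)
      rw [Multiset.prod_cons] at hprod
      obtain ⟨hpB, htB⟩ := hinert p t.prod hp0 ht0 hprod
      rcases Multiset.mem_cons.mp hx with rfl | hx
      · exact hpB
      · exact ih (fun y hy => hne y (Multiset.mem_cons_of_mem hy)) htB x hx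
  refine UniqueFactorizationMonoid.of_exists_prime_factors ?_
  rintro ⟨b, hbB⟩ hb0
  have hb0' : b ≠ 0 := by simpa [Subtype.ext_iff] using hb0
  obtain ⟨f, hf, u, hu⟩ := UniqueFactorizationMonoid.exists_prime_factors (α := A) b hb0'
  rcases f.empty_or_exists_mem with rfl | ⟨p, hp⟩
  · refine ⟨0, by simp, ?_⟩
    simp only [Multiset.prod_zero]
    have : IsUnit ((⟨b, hbB⟩ : B) : A) := ⟨u, by simpa using hu⟩
    exact (associated_one_iff_isUnit.mpr (hunit _ this)).symm
  · obtain ⟨t, rfl⟩ := Multiset.exists_cons_of_mem hp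
    set g : Multiset A := (↑u * p) ::ₘ t with hg
    have hgprime : ∀ x ∈ g, Prime x := by
      intro x hx
      rcases Multiset.mem_cons.mp hx with rfl | hx
      · exact (Associated.prime ⟨u, mul_comm p u⟩ (hf p (Multiset.mem_cons_self p t)))
      · exact hf x (Multiset.mem_cons_of_mem hx)
    have hgprod : g.prod = b := by
      rw [hg, ← hu, Multiset.prod_cons, Multiset.prod_cons]; ring
    have hgne : ∀ x ∈ g, x ≠ 0 := fun x hx => (hgprime x hx).ne_zero
    have hgB : ∀ x ∈ g, x ∈ B := hmult g hgne (hgprod ▸ hbB)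
    refine ⟨g.pmap (fun x hx => (⟨x, hx⟩ : B)) hgB, ?_, ?_⟩
    · intro y hy
      obtain ⟨x, hx, rfl⟩ := Multiset.mem_pmap.mp hy
      exact hprime _ (hgprime x hx)
    · have hcoe : (((g.pmap (fun x hx => (⟨x, hx⟩ : B)) hgB).prod : B) : A) = g.prod := by
        rw [show ((((g.pmap (fun x hx => (⟨x, hx⟩ : B)) hgB).prod : B)) : A)
            = B.subtype (g.pmap (fun x hx => (⟨x, hx⟩ : B)) hgB).prod from rfl,
          map_multiset_prod B.subtype, Multiset.map_pmap]
        congr 1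
        exact Eq.trans
          (Multiset.pmap_congr (f := fun a h => B.subtype ⟨a, h⟩) (g := fun a _ => id a)
            g (fun a _ _ _ => rfl))
          ((Multiset.pmap_eq_map (· ∈ B) id g hgB).trans (Multiset.map_id g))
      have : (g.pmap (fun x hx => (⟨x, hx⟩ : B)) hgB).prod = ⟨b, hbB⟩ :=
        Subtype.ext (by rw [hcoe, hgprod])
      exact this ▸ Associated.refl _
end

section
/- An inert subring of a GCD domain is a GCD domain. -/
/-- An inert subring of a GCD (HCF) domain is a GCD domain, where a GCD domain means
that the intersection of any two principal ideals is principal. -/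
theorem stmt_4 {A : Type*} [CommRing A] [IsDomain A]
    (hgcd : ∀ a b : A, (Ideal.span {a} ⊓ Ideal.span {b}).IsPrincipal)
    (B : Subring A)
    (hinert : ∀ f g : A, f ≠ 0 → g ≠ 0 → f * g ∈ B → f ∈ B ∧ g ∈ B) :
    ∀ a b : B, ((Ideal.span {a} ⊓ Ideal.span {b} : Ideal B)).IsPrincipal := by
  intro a b
  rcases eq_or_ne a 0 with ha | ha
  · refine ⟨⟨0, ?_⟩⟩
    rw [ha, Ideal.span_singleton_eq_bot.mpr rfl, bot_inf_eq]
    exact (Ideal.span_singleton_eq_bot.mpr rfl).symm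
  rcases eq_or_ne b 0 with hb | hb
  · refine ⟨⟨0, ?_⟩⟩
    rw [hb, Ideal.span_singleton_eq_bot.mpr rfl, inf_bot_eq]
    exact (Ideal.span_singleton_eq_bot.mpr rfl).symm
  have haA : (a : A) ≠ 0 := fun h => ha (Subtype.ext h)
  have hbA : (b : A) ≠ 0 := fun h => hb (Subtype.ext h)
  obtain ⟨c, hc⟩ := hgcd (a : A) (b : A)
  have hab : (a : A) * (b : A) ∈ Ideal.span {(c : A)} := by
    have : (a : A) * (b : A) ∈ Ideal.span {(a : A)} ⊓ Ideal.span {(b : A)} :=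
      ⟨Ideal.mem_span_singleton.mpr ⟨b, rfl⟩,
        Ideal.mem_span_singleton.mpr ⟨a, mul_comm _ _⟩⟩
    rwa [hc] at this
  obtain ⟨d, hd⟩ := Ideal.mem_span_singleton.mp hab
  have habne : (a : A) * b ≠ 0 := mul_ne_zero haA hbA
  have hcne : c ≠ 0 := by rintro rfl; rw [zero_mul] at hd; exact habne hd
  have hdne : d ≠ 0 := by rintro rfl; rw [mul_zero] at hd; exact habne hd
  have hcB : c ∈ B := (hinert c d hcne hdne (by rw [← hd]; exact mul_mem a.2 b.2)).1
  -- c ∈ span a ⊓ span b in A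
  have hcmem : c ∈ Ideal.span {(a : A)} ⊓ Ideal.span {(b : A)} := by
    rw [hc]; exact Ideal.mem_span_singleton_self c
  obtain ⟨x, hx⟩ := Ideal.mem_span_singleton.mp hcmem.1
  obtain ⟨y, hy⟩ := Ideal.mem_span_singleton.mp hcmem.2
  have hxne : x ≠ 0 := by rintro rfl; rw [mul_zero] at hx; exact hcne hx
  have hyne : y ≠ 0 := by rintro rfl; rw [mul_zero] at hy; exact hcne hy
  have hxB : x ∈ B := (hinert (a : A) x haA hxne (by rw [← hx]; exact hcB)).2
  have hyB : y ∈ B := (hinert (b : A) y hbA hyne (by rw [← hy]; exact hcB)).2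
  refine ⟨⟨⟨c, hcB⟩, le_antisymm ?_ ?_⟩⟩
  · rintro ⟨t, htB⟩ ⟨hta, htb⟩
    obtain ⟨⟨r, hrB⟩, hr⟩ := Ideal.mem_span_singleton.mp hta
    obtain ⟨⟨s, hsB⟩, hs⟩ := Ideal.mem_span_singleton.mp htb
    have htA : t ∈ Ideal.span {c} := by
      have : t ∈ Ideal.span {(a : A)} ⊓ Ideal.span {(b : A)} :=
        ⟨Ideal.mem_span_singleton.mpr ⟨r, congrArg Subtype.val hr⟩,
          Ideal.mem_span_singleton.mpr ⟨s, congrArg Subtype.val hs⟩⟩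
      rwa [hc] at this
    obtain ⟨u, hu⟩ := Ideal.mem_span_singleton.mp htA
    rcases eq_or_ne t 0 with ht0 | ht0
    · subst ht0
      exact Ideal.mem_span_singleton.mpr ⟨0, Subtype.ext (by simp)⟩
    · have hune : u ≠ 0 := by rintro rfl; rw [mul_zero] at hu; exact ht0 hu
      have huB : u ∈ B := (hinert c u hcne hune (by rw [← hu]; exact htB)).2
      exact Ideal.mem_span_singleton.mpr ⟨⟨u, huB⟩, Subtype.ext hu⟩
  · exact (Ideal.span_singleton_le_iff_mem _).mpr ⟨Ideal.mem_span_singleton.mpr ⟨⟨x, hxB⟩, Subtype.ext hx⟩,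
      Ideal.mem_span_singleton.mpr ⟨⟨y, hyB⟩, Subtype.ext hy⟩⟩
end

section
/- A retract of a unique factorization domain is a unique factorization domain. That is, if A is a UFD, R is a subring of A, and there is a ring homomorphism φ : A → R with φ(r) = r for all r ∈ R, then R is a UFD. -/
/-- A retract of a unique factorization domain is a unique factorization domain. -/
theorem stmt_5 {A : Type*} [CommRing A] [IsDomain A] [UniqueFactorizationMonoid A]
    (R : Subring A) (φ : A →+* R) (hφ : ∀ r : R, φ (r : A) = r) :
    UniqueFactorizationMonoid R := by
  -- key: divisibility in R coincides with divisibility in A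
  have key : ∀ a b : R, (a : A) ∣ (b : A) ↔ a ∣ b := by
    intro a b
    constructor
    · rintro ⟨c, hc⟩
      refine ⟨φ c, ?_⟩
      have := congrArg φ hc
      rwa [map_mul, hφ, hφ] at this
    · rintro ⟨c, hc⟩
      exact ⟨(c : A), by rw [hc]; push_cast; ring⟩
  have unit_iff : ∀ a : R, IsUnit (a : A) ↔ IsUnit a := by
    intro a
    constructor
    · intro h
      rcases (key a 1).mp h.dvd with ⟨c, hc⟩
      exact IsUnit.of_mul_eq_one (a := a) c hc.symm
    · intro h
      exact h.map (Subring.subtype R)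
  haveI : WfDvdMonoid R := by
    refine ⟨?_⟩
    have : ∀ a b : R, DvdNotUnit a b → DvdNotUnit (a : A) (b : A) := by
      rintro a b ⟨ha, x, hx, hab⟩
      refine ⟨by exact_mod_cast ha, x, fun h => hx ((unit_iff x).mp h), ?_⟩
      rw [hab]; push_cast; ring
    exact Subrelation.wf (fun {a b} h => this a b h)
      (InvImage.wf (fun r : R => (r : A)) wellFounded_dvdNotUnit)
  haveI : DecompositionMonoid R := by
    refine ⟨fun a b c h => ?_⟩
    have hA : (a : A) ∣ (b : A) * (c : A) := by
      exact_mod_cast (key a (b * c)).mpr h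
    obtain ⟨x, y, hx, hy, hxy⟩ := exists_dvd_and_dvd_of_dvd_mul hA
    refine ⟨φ x, φ y, ?_, ?_, ?_⟩
    · rcases hx with ⟨d, hd⟩
      exact ⟨φ d, by rw [← hφ b, hd, map_mul]⟩
    · rcases hy with ⟨d, hd⟩
      exact ⟨φ d, by rw [← hφ c, hd, map_mul]⟩
    · rw [← hφ a, hxy, map_mul]
  infer_instance
end

section
/- Let R be an integral domain and A an A^n-fibration over R. Then A is an integral domain and R is inert in A: for all nonzero f, g ∈ A with fg ∈ R, both f and g lie in R. -/
open TensorProduct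

section aux

lemma aux_ker_residue {R : Type*} [CommRing R] (P : Ideal R) [P.IsPrime] (r : R) :
    algebraMap R (IsLocalRing.ResidueField (Localization.AtPrime P)) r = 0 ↔ r ∈ P := by
  rw [IsScalarTower.algebraMap_apply R (Localization.AtPrime P)
      (IsLocalRing.ResidueField (Localization.AtPrime P)),
    IsLocalRing.ResidueField.algebraMap_eq, IsLocalRing.residue]
  exact Ideal.Quotient.eq_zero_iff_mem.trans (IsLocalization.AtPrime.to_map_mem_maximal_iff _ P r)

lemma aux_isUnit {K : Type*} [Field K] : ∀ {n : ℕ} (p : MvPolynomial (Fin n) K),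
    IsUnit p → ∃ c : K, p = MvPolynomial.C c
  | 0, p, _ => ⟨_, MvPolynomial.eq_C_of_isEmpty p⟩
  | (n+1), p, hu => by
    have h2 : IsUnit (MvPolynomial.finSuccEquiv K n p) := hu.map _
    obtain ⟨q, hq, hCq⟩ := Polynomial.isUnit_iff.mp h2
    obtain ⟨c, rfl⟩ := aux_isUnit q hq
    refine ⟨c, ?_⟩
    have h3 := congrArg (MvPolynomial.finSuccEquiv K n).symm hCq
    rw [AlgEquiv.symm_apply_apply] at h3
    have h4 := RingHom.congr_fun (MvPolynomial.finSuccEquiv_comp_C_eq_C (R := K) n) c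
    simp only [RingHom.comp_apply, RingHom.coe_coe] at h4
    rw [← h3, ← h4]

lemma aux_descend {R A : Type*} [CommRing R] [CommRing A] [Algebra R A]
    [Module.FaithfullyFlat R A] (I : Ideal R) (a : R)
    (h : a • (1 : A) ∈ I • (⊤ : Submodule R A)) : a ∈ I := by
  classical
  set x : R ⧸ I := Ideal.Quotient.mk I a with hxdef
  have hx0 : (x ⊗ₜ[R] (1 : A) : (R ⧸ I) ⊗[R] A) = 0 := by
    apply (TensorProduct.quotTensorEquivQuotSMul A I).injective
    rw [map_zero, hxdef, TensorProduct.quotTensorEquivQuotSMul_mk_tmul]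
    exact (Submodule.Quotient.mk_eq_zero _).mpr h
  set J : Ideal R := (Submodule.span R {x}).annihilator with hJ
  let inc : (R ⧸ J) →ₗ[R] (R ⧸ I) :=
    Submodule.liftQ J ((LinearMap.lsmul R (R ⧸ I)).flip x) (fun r hr => by
      simpa only [LinearMap.mem_ker, LinearMap.flip_apply, LinearMap.lsmul_apply,
        Submodule.mem_annihilator_span_singleton, hJ] using hr)
  have hinc : Function.Injective inc := by
    rw [← LinearMap.ker_eq_bot, eq_bot_iff]
    intro r hr
    induction r using Quotient.inductionOn' with
    | h r =>
      simpa only [Submodule.Quotient.mk''_eq_mk, Submodule.mem_bot, Submodule.Quotient.mk_eq_zero,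
        Submodule.mem_annihilator_span_singleton, LinearMap.mem_ker, Submodule.liftQ_apply,
        LinearMap.flip_apply, LinearMap.lsmul_apply, J, inc] using hr
  have h1 : LinearMap.rTensor A inc
      ((Ideal.Quotient.mk J (1 : R)) ⊗ₜ[R] (1 : A)) = x ⊗ₜ[R] (1 : A) := by
    have hinc1 : inc (Ideal.Quotient.mk J (1 : R)) = x := by
      show ((LinearMap.lsmul R (R ⧸ I)).flip x) (1 : R) = x
      simp
    rw [LinearMap.rTensor_tmul, hinc1]
  have h2 : ((Ideal.Quotient.mk J (1 : R)) ⊗ₜ[R] (1 : A) : (R ⧸ J) ⊗[R] A) = 0 := by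
    apply Module.Flat.rTensor_preserves_injective_linearMap (M := A) inc hinc
    rw [h1, hx0, map_zero]
  have h3 : (1 : A) ∈ J • (⊤ : Submodule R A) := by
    have h4 := congrArg (TensorProduct.quotTensorEquivQuotSMul A J) h2
    rw [map_zero, TensorProduct.quotTensorEquivQuotSMul_mk_tmul, one_smul] at h4
    exact (Submodule.Quotient.mk_eq_zero _).mp h4
  have h4 : Ideal.map (algebraMap R A) J = ⊤ := by
    rw [Ideal.eq_top_iff_one]
    rw [Ideal.smul_top_eq_map] at h3
    exact h3
  have h5 : J • (⊤ : Submodule R A) = ⊤ := by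
    rw [Ideal.smul_top_eq_map, h4]
    rfl
  have hJtop : J = ⊤ :=
    ((Module.FaithfullyFlat.iff_flat_and_ideal_smul_eq_top R A).mp inferInstance).2 J h5
  have h6 : (1 : R) • x = 0 := by
    have : (1 : R) ∈ J := hJtop ▸ Submodule.mem_top
    rw [hJ] at this
    exact (Submodule.mem_annihilator_span_singleton x 1).mp this
  rw [one_smul] at h6
  exact Ideal.Quotient.eq_zero_iff_mem.mp h6

end aux

/-- If `R` is an integral domain and `A` an `𝔸ⁿ`-fibration over `R`, then `A` is an
integral domain and (the image of) `R` is inert in `A`. -/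
theorem stmt_7 {R A : Type*} [CommRing R] [IsDomain R] [CommRing A] [Algebra R A] (n : ℕ)
    (hfg : Algebra.FiniteType R A) (hflat : Module.Flat R A)
    (hfib : ∀ (P : Ideal R) [P.IsPrime],
      Nonempty
        ((TensorProduct R (IsLocalRing.ResidueField (Localization.AtPrime P)) A)
          ≃ₐ[IsLocalRing.ResidueField (Localization.AtPrime P)]
        MvPolynomial (Fin n) (IsLocalRing.ResidueField (Localization.AtPrime P)))) :
    IsDomain A ∧ ∀ f g : A, f ≠ 0 → g ≠ 0 → f * g ∈ (algebraMap R A).range →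
      f ∈ (algebraMap R A).range ∧ g ∈ (algebraMap R A).range := by
  classical
  haveI : Module.Flat R A := hflat
  haveI : (⊥ : Ideal R).IsPrime := Ideal.bot_prime
  set K0 := IsLocalRing.ResidueField (Localization.AtPrime (⊥ : Ideal R)) with hK0def
  obtain ⟨e⟩ := hfib ⊥
  have hK0inj : Function.Injective (algebraMap R K0) := by
    intro u v h
    have h1 : algebraMap R K0 (u - v) = 0 := by rw [map_sub, h, sub_self]
    have h2 := (aux_ker_residue ⊥ (u - v)).mp h1
    rw [Ideal.mem_bot, sub_eq_zero] at h2
    exact h2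
  -- `includeRight : A → K0 ⊗ A` is injective
  have hincl : Function.Injective
      (Algebra.TensorProduct.includeRight : A →ₐ[R] K0 ⊗[R] A) := by
    have hL : Function.Injective (Algebra.linearMap R K0) := hK0inj
    have hg := Module.Flat.rTensor_preserves_injective_linearMap (M := A)
      (Algebra.linearMap R K0) hL
    intro a b hab
    have h2 : (LinearMap.rTensor A (Algebra.linearMap R K0)) ((1 : R) ⊗ₜ[R] a) =
        (LinearMap.rTensor A (Algebra.linearMap R K0)) ((1 : R) ⊗ₜ[R] b) := by
      simpa [LinearMap.rTensor_tmul, Algebra.linearMap_apply] using hab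
    have h3 := hg h2
    have h4 := congrArg (TensorProduct.lid R A) h3
    simpa using h4
  let ψ : A →ₐ[R] MvPolynomial (Fin n) K0 :=
    ((e.restrictScalars R).toAlgHom.comp Algebra.TensorProduct.includeRight)
  have hψ : Function.Injective ψ := by
    intro a b h
    exact hincl ((e.restrictScalars R).injective h)
  have hdom : IsDomain A := Function.Injective.isDomain ψ.toRingHom hψ
  haveI := hdom
  -- faithfully flat
  haveI hFF : Module.FaithfullyFlat R A := by
    refine { toFlat := hflat, submodule_ne_top := ?_ }
    intro m hm hEq
    haveI : m.IsPrime := hm.isPrime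
    obtain ⟨em⟩ := hfib m
    set Km := IsLocalRing.ResidueField (Localization.AtPrime m) with hKmdef
    haveI : Nontrivial (Km ⊗[R] A) := em.toEquiv.nontrivial
    haveI hss' : Subsingleton (A ⧸ m • (⊤ : Submodule R A)) :=
      Submodule.Quotient.subsingleton_iff.mpr hEq
    haveI hss : Subsingleton ((R ⧸ m) ⊗[R] A) :=
      (TensorProduct.quotTensorEquivQuotSMul A m).toEquiv.injective.subsingleton
    let φ : (R ⧸ m) →ₐ[R] Km :=
      Ideal.Quotient.liftₐ m (Algebra.ofId R Km)
        (fun r hrm => (aux_ker_residue m r).mpr hrm)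
    let Φ := Algebra.TensorProduct.map φ (AlgHom.id R A)
    have hone : (1 : Km ⊗[R] A) = 0 := by
      have h1 : (1 : (R ⧸ m) ⊗[R] A) = 0 := Subsingleton.elim _ _
      calc (1 : Km ⊗[R] A) = Φ 1 := (map_one Φ).symm
        _ = Φ 0 := by rw [h1]
        _ = 0 := map_zero Φ
    exact one_ne_zero hone
  -- injectivity of algebraMap R A
  have hMvinj : Function.Injective (algebraMap R (MvPolynomial (Fin n) K0)) := by
    intro u v h
    rw [IsScalarTower.algebraMap_apply R K0 (MvPolynomial (Fin n) K0),
      IsScalarTower.algebraMap_apply R K0 (MvPolynomial (Fin n) K0),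
      MvPolynomial.algebraMap_eq] at h
    exact hK0inj (MvPolynomial.C_injective _ _ h)
  have hinjA : Function.Injective (algebraMap R A) := by
    intro u v h
    have h1 := congrArg ψ h
    rw [AlgHom.commutes, AlgHom.commutes] at h1
    exact hMvinj h1
  -- key claim
  have key : ∀ f g : A, f ≠ 0 → g ≠ 0 → f * g ∈ (algebraMap R A).range →
      f ∈ (algebraMap R A).range := by
    rintro f g hf hg ⟨r, hr⟩
    have hr0 : r ≠ 0 := by
      rintro rfl
      rw [map_zero] at hr
      exact mul_ne_zero hf hg hr.symm
    have hc0 : algebraMap R K0 r ≠ 0 := fun h =>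
      hr0 (hK0inj (by rw [h, map_zero]))
    have hmul : ψ f * ψ g = MvPolynomial.C (algebraMap R K0 r) := by
      rw [← map_mul, ← hr, AlgHom.commutes,
        IsScalarTower.algebraMap_apply R K0 (MvPolynomial (Fin n) K0),
        MvPolynomial.algebraMap_eq]
    have hCunit : IsUnit (MvPolynomial.C (algebraMap R K0 r) : MvPolynomial (Fin n) K0) :=
      IsUnit.of_mul_eq_one (MvPolynomial.C (algebraMap R K0 r)⁻¹)
        (by rw [← map_mul, mul_inv_cancel₀ hc0, map_one])
    have hfu : IsUnit (ψ f) := isUnit_of_mul_isUnit_left (hmul ▸ hCunit)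
    obtain ⟨c, hcψ⟩ := aux_isUnit _ hfu
    -- write c = a / s
    obtain ⟨z, hz⟩ := Ideal.Quotient.mk_surjective
      (I := IsLocalRing.maximalIdeal (Localization.AtPrime (⊥ : Ideal R))) c
    obtain ⟨⟨a, s⟩, has⟩ := IsLocalization.surj (M := (⊥ : Ideal R).primeCompl)
      (S := Localization.AtPrime (⊥ : Ideal R)) z
    have hs0 : (s : R) ≠ 0 := by
      intro h0
      have h2 := s.2
      rw [h0] at h2
      exact h2 (Ideal.zero_mem ⊥)
    have hcs : c * algebraMap R K0 (s : R) = algebraMap R K0 a := by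
      have h1 := congrArg (IsLocalRing.residue (Localization.AtPrime (⊥ : Ideal R))) has
      rw [map_mul] at h1
      rw [← hz]
      simp only [IsScalarTower.algebraMap_apply R (Localization.AtPrime (⊥ : Ideal R)) K0,
        IsLocalRing.ResidueField.algebraMap_eq]
      exact h1
    have hsf : algebraMap R A (s : R) * f = algebraMap R A a := by
      apply hψ
      rw [map_mul, AlgHom.commutes, AlgHom.commutes, hcψ,
        IsScalarTower.algebraMap_apply R K0 (MvPolynomial (Fin n) K0),
        IsScalarTower.algebraMap_apply R K0 (MvPolynomial (Fin n) K0),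
        MvPolynomial.algebraMap_eq, ← map_mul, mul_comm, hcs]
    have hmem' : a • (1 : A) ∈ (Ideal.span {(s : R)}) • (⊤ : Submodule R A) := by
      have heq : a • (1 : A) = (s : R) • f := by
        rw [Algebra.smul_def, Algebra.smul_def, mul_one, ← hsf]
      rw [heq]
      exact Submodule.smul_mem_smul (Ideal.mem_span_singleton_self _) Submodule.mem_top
    obtain ⟨t, ht⟩ := Ideal.mem_span_singleton'.mp
      (aux_descend (Ideal.span {(s : R)}) a hmem')
    refine ⟨t, ?_⟩
    have hcancel : algebraMap R A (s : R) ≠ 0 := fun h =>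
      hs0 (hinjA (by rw [h, map_zero]))
    have h2 : algebraMap R A (s : R) * f = algebraMap R A (s : R) * algebraMap R A t := by
      rw [hsf, ← map_mul, ← ht, mul_comm]
    exact (mul_left_cancel₀ hcancel h2).symm
  exact ⟨hdom, fun f g hf hg hmem =>
    ⟨key f g hf hg hmem, key g f hg hf (by rwa [mul_comm])⟩⟩
end

section
/- Let R be a ring containing ℚ, A a commutative R-algebra, and D : A → A a locally nilpotent R-derivation having a slice s (i.e., D(s) = 1). Then A = Ker(D)[s] and s is transcendental over Ker(D), so A is a polynomial ring in one variable over Ker(D). -/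
open Polynomial

/-- Slice theorem: if `R` contains `ℚ`, `A` is a commutative `R`-algebra and
`D : A → A` is a locally nilpotent `R`-derivation with a slice `s` (`D s = 1`),
then the natural map `Ker(D)[T] → A, T ↦ s` is an isomorphism, i.e.
`A = Ker(D)[s]` is a polynomial ring in one variable over `Ker(D)`. -/
theorem stmt_11 {R A : Type*} [CommRing R] [Algebra ℚ R] [CommRing A] [Algebra R A]
    (D : Derivation R A A) (hln : ∀ x : A, ∃ n : ℕ, (⇑D)^[n] x = 0)
    (s : A) (hs : D s = 1)
    (B : Subalgebra R A) (hB : ∀ a : A, a ∈ B ↔ D a = 0) :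
    Function.Bijective (Polynomial.aeval (R := B) s) := by
  classical
  set q : ℚ →+* A := (algebraMap R A).comp (algebraMap ℚ R) with hqdef
  have hDq : ∀ x : ℚ, D (q x) = 0 := fun x => D.map_algebraMap (A := A) _
  have hqmem : ∀ x : ℚ, q x ∈ B := fun x => (hB _).2 (hDq x)
  have hqnat : ∀ n : ℕ, q n = (n : A) := fun n => map_natCast q n
  have hunit : ∀ n : ℕ, q (((n:ℚ)+1)⁻¹) * ((n:A)+1) = 1 := by
    intro n
    have h1 : ((n:A)+1) = q ((n:ℚ)+1) := by rw [map_add, map_one, hqnat]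
    rw [h1, ← map_mul, inv_mul_cancel₀ (Nat.cast_add_one_ne_zero n), map_one]
  have hzero : ∀ (n : ℕ) (x : A), ((n:A)+1) * x = 0 → x = 0 := by
    intro n x h
    calc x = (q (((n:ℚ)+1)⁻¹) * ((n:A)+1)) * x := by rw [hunit, one_mul]
    _ = q (((n:ℚ)+1)⁻¹) * (((n:A)+1) * x) := by ring
    _ = 0 := by rw [h, mul_zero]
  have hkey : ∀ (b : A), D b = 0 → ∀ n : ℕ, D (b * s ^ (n+1)) = ((n:A)+1) * (b * s ^ n) := by
    intro b hb n
    rw [D.leibniz, hb, D.leibniz_pow, hs]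
    simp [smul_eq_mul]
    ring
  have hD_aeval : ∀ p : Polynomial B, D (aeval (R := B) s p) = aeval (R := B) s (derivative p) := by
    intro p
    induction p using Polynomial.induction_on' with
    | add p1 p2 h1 h2 =>
        rw [map_add, D.map_add, derivative_add, map_add, h1, h2]
    | monomial n b =>
      cases n with
      | zero =>
          have hco : (algebraMap B A) b = (b : A) := rfl
          simp [aeval_monomial, hco, (hB _).1 b.2]
      | succ n =>
        rw [derivative_monomial]
        simp only [aeval_monomial]
        have hbA : D ((algebraMap B A) b) = 0 := (hB _).1 b.2
        rw [hkey _ hbA n]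
        push_cast
        ring
  -- injectivity
  have hinj : ∀ (n : ℕ) (p : Polynomial B), p.natDegree ≤ n →
      aeval (R := B) s p = 0 → p = 0 := by
    intro n
    induction n with
    | zero =>
      intro p hdeg h0
      rw [Polynomial.eq_C_of_natDegree_le_zero hdeg] at h0 ⊢
      rw [aeval_C] at h0
      have hc0 : p.coeff 0 = 0 := Subtype.ext h0
      rw [hc0, map_zero]
    | succ n ih =>
      intro p hdeg h0
      have hd0 : aeval (R := B) s (derivative p) = 0 := by rw [← hD_aeval, h0, D.map_zero]
      have hder : derivative p = 0 :=
        ih _ (le_trans (natDegree_derivative_le p) (by omega)) hd0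
      have hc : ∀ i, p.coeff (i+1) = 0 := by
        intro i
        have h1 : (derivative p).coeff i = 0 := by rw [hder, coeff_zero]
        rw [coeff_derivative] at h1
        have h2 : ((i:A)+1) * ((p.coeff (i+1) : B) : A) = 0 := by
          have h3 := congrArg (Subtype.val) h1
          push_cast at h3
          linear_combination h3
        exact Subtype.ext (hzero i _ h2)
      have hpc : p = C (p.coeff 0) := by
        ext m
        cases m with
        | zero => simp
        | succ m => simp [hc m, coeff_C]
      rw [hpc] at h0 ⊢
      rw [aeval_C] at h0
      have hc0 : p.coeff 0 = 0 := Subtype.ext (show ((p.coeff 0 : B) : A) = 0 from h0)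
      rw [hc0, map_zero]
  -- evaluating as a sum over the support
  have haev : ∀ r : Polynomial B,
      aeval (R := B) s r = ∑ i ∈ r.support, ((r.coeff i : B) : A) * s ^ i := by
    intro r
    rw [Polynomial.aeval_def, Polynomial.eval₂_eq_sum, Polynomial.sum_def]
    rfl
  -- surjectivity
  have hsurj : ∀ (n : ℕ) (a : A), (⇑D)^[n] a = 0 →
      ∃ p : Polynomial B, aeval (R := B) s p = a := by
    intro n
    induction n with
    | zero =>
      intro a ha
      exact ⟨0, by simpa using ha.symm⟩
    | succ n ih =>
      intro a ha
      rw [Function.iterate_succ_apply] at ha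
      obtain ⟨p, hp⟩ := ih (D a) ha
      set e : ℕ → B := fun k => ⟨q (((k:ℚ)+1)⁻¹), hqmem _⟩ with he
      set P : Polynomial B := ∑ i ∈ p.support, C (e i * p.coeff i) * X^(i+1) with hP
      have hDP : D (aeval (R := B) s P) = D a := by
        rw [hP, map_sum, map_sum]
        have hterm : ∀ i ∈ p.support,
            D (aeval (R := B) s (C (e i * p.coeff i) * X^(i+1)))
              = ((p.coeff i : B) : A) * s ^ i := by
          intro i _
          have hmem : ((e i * p.coeff i : B) : A) ∈ B := (e i * p.coeff i).2
          have hb : D ((e i * p.coeff i : B) : A) = 0 := (hB _).1 hmem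
          have hcoe : aeval (R := B) s (C (e i * p.coeff i) * X^(i+1))
              = ((e i * p.coeff i : B) : A) * s ^ (i+1) := by
            simp [aeval_monomial]
          rw [hcoe, hkey _ hb i]
          push_cast
          calc ((i:A)+1) * ((e i : A) * ((p.coeff i : B) : A) * s ^ i)
              = (q (((i:ℚ)+1)⁻¹) * ((i:A)+1)) * (((p.coeff i : B) : A) * s ^ i) := by
                rw [he]; ring
            _ = ((p.coeff i : B) : A) * s ^ i := by rw [hunit, one_mul]
        rw [Finset.sum_congr rfl hterm, ← haev, hp]
      have hmem2 : a - aeval (R := B) s P ∈ B := by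
        rw [hB, D.map_sub, hDP, sub_self]
      refine ⟨C ⟨a - aeval (R := B) s P, hmem2⟩ + P, ?_⟩
      rw [map_add, aeval_C]
      show (a - aeval (R := B) s P) + aeval (R := B) s P = a
      ring
  constructor
  · intro p1 p2 h
    have h0 : aeval (R := B) s (p1 - p2) = 0 := by rw [map_sub, h, sub_self]
    have := hinj (p1 - p2).natDegree _ le_rfl h0
    exact sub_eq_zero.mp this
  · intro a
    obtain ⟨n, hn⟩ := hln a
    exact hsurj n a hn
end

section
/- Let A be an integral domain of characteristic zero and D : A → A a nonzero locally nilpotent derivation. Then Ker(D) is inert (factorially closed) in A: for nonzero f, g ∈ A, if fg ∈ Ker(D) then f, g ∈ Ker(D). -/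
open Finset

private lemma iter_leibniz {A : Type*} [CommRing A] (D : Derivation ℤ A A) (f g : A) :
    ∀ k : ℕ, (⇑D)^[k] (f * g) =
      ∑ i ∈ Finset.range (k + 1), k.choose i • ((⇑D)^[i] f * (⇑D)^[k - i] g) := by
  intro k
  induction k with
  | zero => simp
  | succ k ih =>
    rw [Function.iterate_succ_apply', ih, map_sum]
    have step : ∀ i ∈ Finset.range (k + 1),
        D (k.choose i • ((⇑D)^[i] f * (⇑D)^[k - i] g)) =
          k.choose i • ((⇑D)^[i] f * (⇑D)^[k + 1 - i] g)
          + k.choose i • ((⇑D)^[i + 1] f * (⇑D)^[k - i] g) := by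
      intro i hi
      have hik : i ≤ k := Nat.lt_succ_iff.mp (Finset.mem_range.mp hi)
      have h1 : k + 1 - i = (k - i) + 1 := by omega
      rw [map_nsmul, D.leibniz, smul_add, smul_eq_mul, smul_eq_mul, h1,
        Function.iterate_succ_apply', Function.iterate_succ_apply']
      ring_nf
    rw [Finset.sum_congr rfl step, Finset.sum_add_distrib]
    -- RHS
    rw [Finset.sum_range_succ' (fun i => (k+1).choose i • ((⇑D)^[i] f * (⇑D)^[k + 1 - i] g))]
    have hrw : ∀ i ∈ Finset.range (k + 1),
        (k+1).choose (i+1) • ((⇑D)^[i+1] f * (⇑D)^[k + 1 - (i+1)] g)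
          = k.choose i • ((⇑D)^[i+1] f * (⇑D)^[k - i] g)
          + k.choose (i+1) • ((⇑D)^[i+1] f * (⇑D)^[k - i] g) := by
      intro i hi
      have : k + 1 - (i + 1) = k - i := by omega
      rw [this, Nat.choose_succ_succ, add_smul]
    rw [Finset.sum_congr rfl hrw, Finset.sum_add_distrib]
    -- Now match three pieces
    have hfirst : ∑ i ∈ Finset.range (k + 1), k.choose i • ((⇑D)^[i] f * (⇑D)^[k + 1 - i] g)
        = ∑ i ∈ Finset.range (k + 1), k.choose (i+1) • ((⇑D)^[i+1] f * (⇑D)^[k - i] g)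
          + (k+1).choose 0 • ((⇑D)^[0] f * (⇑D)^[k + 1 - 0] g) := by
      rw [Finset.sum_range_succ (fun i => k.choose (i+1) • ((⇑D)^[i+1] f * (⇑D)^[k - i] g))]
      rw [Finset.sum_range_succ' (fun i => k.choose i • ((⇑D)^[i] f * (⇑D)^[k + 1 - i] g))]
      have : ∀ i ∈ Finset.range k,
          k.choose (i+1) • ((⇑D)^[i+1] f * (⇑D)^[k + 1 - (i+1)] g)
            = k.choose (i+1) • ((⇑D)^[i+1] f * (⇑D)^[k - i] g) := by
        intro i hi
        have : k + 1 - (i + 1) = k - i := by omega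
        rw [this]
      rw [Finset.sum_congr rfl this, Nat.choose_succ_self, zero_smul, add_zero]
      simp
    rw [hfirst]
    ring

private lemma iter_zero {A : Type*} [CommRing A] (D : Derivation ℤ A A) (n : ℕ) :
    (⇑D)^[n] 0 = 0 := Function.iterate_fixed (map_zero D) n

private lemma vanish_of_ge {A : Type*} [CommRing A] (D : Derivation ℤ A A) {x : A} {m n : ℕ}
    (h : (⇑D)^[m] x = 0) (hmn : m ≤ n) : (⇑D)^[n] x = 0 := by
  obtain ⟨j, rfl⟩ := Nat.exists_eq_add_of_le hmn
  rw [Nat.add_comm, Function.iterate_add_apply, h, iter_zero]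

/-- The kernel of a nonzero locally nilpotent derivation of a domain of characteristic
zero is factorially closed (inert): if `fg ∈ Ker(D)` with `f, g ≠ 0` then
`f, g ∈ Ker(D)`. -/
theorem stmt_12 {A : Type*} [CommRing A] [IsDomain A] [Algebra ℚ A]
    (D : Derivation ℤ A A) (hln : ∀ x : A, ∃ n : ℕ, (⇑D)^[n] x = 0) (hD : D ≠ 0) :
    ∀ f g : A, f ≠ 0 → g ≠ 0 → D (f * g) = 0 → D f = 0 ∧ D g = 0 := by
  haveI : CharZero A := charZero_of_injective_algebraMap (algebraMap ℚ A).injective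
  -- for each nonzero x, extract the "degree"
  classical
  have key : ∀ x : A, x ≠ 0 → ∃ m : ℕ, (⇑D)^[m] x ≠ 0 ∧ (⇑D)^[m + 1] x = 0 := by
    intro x hx
    have hex := hln x
    have h0 : 0 < Nat.find hex := by
      rcases Nat.eq_zero_or_pos (Nat.find hex) with h | h
      · exact absurd (by simpa [h] using Nat.find_spec hex) hx
      · exact h
    refine ⟨Nat.find hex - 1, Nat.find_min hex (by omega), ?_⟩
    have : Nat.find hex - 1 + 1 = Nat.find hex := by omega
    rw [this]; exact Nat.find_spec hex
  intro f g hf hg hfg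
  obtain ⟨mf, hmf, hmf'⟩ := key f hf
  obtain ⟨mg, hmg, hmg'⟩ := key g hg
  -- compute the top iterate of the product
  have htop : (⇑D)^[mf + mg] (f * g)
      = (mf + mg).choose mf • ((⇑D)^[mf] f * (⇑D)^[mg] g) := by
    rw [iter_leibniz]
    rw [Finset.sum_eq_single mf]
    · have hmm : mf + mg - mf = mg := by omega
      rw [hmm]
    · intro i hi hne
      rcases Nat.lt_or_ge i mf with h | h
      · have : (⇑D)^[mf + mg - i] g = 0 := vanish_of_ge D hmg' (by omega)
        rw [this, mul_zero, smul_zero]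
      · have hgt : mf < i := lt_of_le_of_ne h (Ne.symm hne)
        have : (⇑D)^[i] f = 0 := vanish_of_ge D hmf' (by omega)
        rw [this, zero_mul, smul_zero]
    · intro h
      exact absurd (Finset.mem_range.mpr (by omega)) h
  -- if mf + mg ≥ 1, the top iterate vanishes, contradiction
  have hsum : mf + mg = 0 := by
    by_contra hne
    have h1 : 1 ≤ mf + mg := Nat.one_le_iff_ne_zero.mpr hne
    have hz : (⇑D)^[mf + mg] (f * g) = 0 := by
      obtain ⟨j, hj⟩ := Nat.exists_eq_add_of_le h1
      rw [hj, Nat.add_comm, Function.iterate_add_apply, Function.iterate_one, hfg, iter_zero]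
    rw [htop] at hz
    have hc : ((mf + mg).choose mf : A) ≠ 0 := by
      exact_mod_cast Nat.cast_ne_zero.mpr (Nat.choose_pos (by omega) |>.ne')
    rw [nsmul_eq_mul] at hz
    rcases mul_eq_zero.mp hz with h | h
    · exact hc h
    · rcases mul_eq_zero.mp h with h' | h'
      · exact hmf h'
      · exact hmg h'
  have hmf0 : mf = 0 := by omega
  have hmg0 : mg = 0 := by omega
  constructor
  · have := hmf'; rw [hmf0] at this; simpa using this
  · have := hmg'; rw [hmg0] at this; simpa using this
end

section
/- Let A be an integral domain containing ℚ and D : A → A a nonzero locally nilpotent derivation. Then the transcendence degree of A over Ker(D) equals 1. -/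
set_option maxHeartbeats 1000000
set_option synthInstance.maxHeartbeats 400000

open Polynomial

section Aux

variable {A : Type*} [CommRing A] [IsDomain A] [Algebra ℚ A]
  (D : Derivation ℤ A A)

lemma aux_charZero : CharZero A :=
  charZero_of_injective_algebraMap (algebraMap ℚ A).injective

/-- D kills rationals. -/
lemma aux_DQ (q : ℚ) : D (algebraMap ℚ A q) = 0 := by
  haveI := aux_charZero (A := A)
  have h : (q.den : A) * algebraMap ℚ A q = (q.num : A) := by
    rw [show ((q.den : A)) = algebraMap ℚ A (q.den : ℚ) by simp,
      ← map_mul, show ((q.den : ℚ) * q) = (q.num : ℚ) by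
        rw [mul_comm]; exact_mod_cast q.mul_den_eq_num]
    simp
  have h2 := congrArg D h
  rw [Derivation.leibniz, D.map_natCast, D.map_intCast, smul_eq_mul, smul_eq_mul,
    mul_zero, add_zero] at h2
  have hden : ((q.den : A)) ≠ 0 := Nat.cast_ne_zero.2 q.den_nz
  exact (mul_eq_zero.1 h2).resolve_left hden

lemma aux_Dsmul (q : ℚ) (x : A) : D (q • x) = q • D x := by
  rw [Algebra.smul_def, Algebra.smul_def, Derivation.leibniz, aux_DQ, smul_eq_mul,
    smul_eq_mul, mul_zero, add_zero]

end Aux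

section Aux2

variable {A : Type*} [CommRing A] [IsDomain A] [Algebra ℚ A]
  (D : Derivation ℤ A A) (B : Subalgebra ℤ A)

lemma aux_QB (hB : ∀ a : A, a ∈ B ↔ D a = 0) (q : ℚ) : algebraMap ℚ A q ∈ B := (hB _).2 (aux_DQ D q)

lemma aux_Daeval (hB : ∀ a : A, a ∈ B ↔ D a = 0) (t : A) (p : Polynomial B) :
    D (aeval t p) = aeval t (derivative p) * D t := by
  induction p using Polynomial.induction_on' with
  | add p q hp hq => simp only [derivative_add, map_add, hp, hq]; ring
  | monomial n b =>
    have hb : D (algebraMap B A b) = 0 := (hB _).1 b.2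
    rw [aeval_monomial, derivative_monomial, aeval_monomial, Derivation.leibniz, hb,
      Derivation.leibniz_pow, map_mul, map_natCast]
    simp only [smul_eq_mul, nsmul_eq_mul, mul_zero, add_zero]
    ring

lemma aux_trans (hB : ∀ a : A, a ∈ B ↔ D a = 0) (t : A) (hDt : D t ≠ 0) : Transcendental B t := by
  haveI : CharZero A := aux_charZero
  rw [transcendental_iff]
  suffices H : ∀ (n : ℕ) (p : Polynomial B), p.natDegree ≤ n → aeval t p = 0 → p = 0 by
    intro p hp; exact H p.natDegree p le_rfl hp
  intro n
  induction n with
  | zero =>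
    intro p hdeg hp
    rw [Polynomial.eq_C_of_natDegree_eq_zero (Nat.le_zero.1 hdeg)] at hp ⊢
    rw [aeval_C] at hp
    rw [show p.coeff 0 = 0 from Subtype.ext (by simpa using hp), map_zero]
  | succ n ih =>
    intro p hdeg hp
    by_cases h0 : p.natDegree = 0
    · rw [Polynomial.eq_C_of_natDegree_eq_zero h0] at hp ⊢
      rw [aeval_C] at hp
      rw [show p.coeff 0 = 0 from Subtype.ext (by simpa using hp), map_zero]
    · have h1 : aeval t (derivative p) * D t = 0 := by
        rw [← aux_Daeval D B hB, hp, map_zero]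
      have h2 : aeval t (derivative p) = 0 := by
        rcases mul_eq_zero.1 h1 with h | h
        · exact h
        · exact absurd h hDt
      have h3 : (derivative p).natDegree ≤ n :=
        Nat.lt_succ_iff.1 (lt_of_lt_of_le (Polynomial.natDegree_derivative_lt h0) hdeg)
      have h4 := ih _ h3 h2
      exact absurd (Polynomial.natDegree_eq_zero_of_derivative_eq_zero h4) h0

lemma aux_int (hB : ∀ a : A, a ∈ B ↔ D a = 0) (t : A) (r : A) (hr : r ∈ Algebra.adjoin B ({t} : Set A)) :
    ∃ r₁ ∈ Algebra.adjoin B ({t} : Set A), D r₁ = D t * r := by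
  rw [Algebra.adjoin_singleton_eq_range_aeval] at hr
  obtain ⟨p, hp⟩ := hr
  have hp' : aeval t p = r := hp
  classical
  set c : ℕ → B := fun k => ⟨algebraMap ℚ A (1/(k+1)), aux_QB D B hB _⟩ with hc
  set P : Polynomial B := p.sum fun k b => C (c k * b) * X^(k+1) with hP
  have hcd : ∀ k : ℕ, c k * ((k : B) + 1) = 1 := by
    intro k
    apply Subtype.ext
    push_cast [hc]
    rw [show ((k : A) + 1) = algebraMap ℚ A ((k : ℚ) + 1) by push_cast; simp, ← map_mul]
    rw [one_div, inv_mul_cancel₀ (by positivity), map_one]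
  have hd : derivative P = p := by
    rw [hP, Polynomial.sum_def, map_sum]
    have : ∀ k ∈ p.support, derivative (C (c k * p.coeff k) * X^(k+1))
        = C (p.coeff k) * X^k := by
      intro k _
      rw [Polynomial.derivative_C_mul_X_pow]
      simp only [Nat.add_sub_cancel]
      congr 1
      rw [mul_comm (c k), mul_assoc]
      push_cast
      rw [hcd k, mul_one]
    rw [Finset.sum_congr rfl this]
    conv_rhs => rw [← Polynomial.sum_C_mul_X_pow_eq p]
    rw [Polynomial.sum_def]
  refine ⟨aeval t P, ?_, ?_⟩
  · rw [Algebra.adjoin_singleton_eq_range_aeval]; exact ⟨P, rfl⟩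
  · rw [aux_Daeval D B hB, hd, hp', mul_comm]

lemma aux_pow (hB : ∀ a : A, a ∈ B ↔ D a = 0) (t : A) (hDDt : D (D t) = 0) :
    ∀ (n : ℕ) (a : A), (⇑D)^[n] a = 0 → (D t)^n * a ∈ Algebra.adjoin B ({t} : Set A) := by
  intro n
  induction n with
  | zero =>
    intro a ha
    simp only [Function.iterate_zero, id_eq] at ha
    rw [ha, mul_zero]
    exact Subalgebra.zero_mem _
  | succ n ih =>
    intro a ha
    have h1 : (⇑D)^[n] (D a) = 0 := by rw [← Function.iterate_succ_apply]; exact ha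
    obtain ⟨r₁, hr₁mem, hr₁⟩ := aux_int D B hB t _ (ih _ h1)
    have hsB : D t ^ (n+1) ∈ B := pow_mem ((hB _).2 hDDt) _
    have hs : D (D t ^ (n+1) * a - r₁) = 0 := by
      rw [map_sub, Derivation.leibniz, hr₁, (hB _).1 hsB]
      simp only [smul_eq_mul, mul_zero, add_zero]
      ring
    have hmem : D t ^ (n+1) * a - r₁ ∈ Algebra.adjoin B ({t} : Set A) := by
      have h := Subalgebra.algebraMap_mem (Algebra.adjoin B ({t} : Set A))
        (⟨_, (hB _).2 hs⟩ : B)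
      exact h
    have := Subalgebra.add_mem _ hmem hr₁mem
    rwa [sub_add_cancel] at this

end Aux2

/-- If `A` is a domain containing `ℚ` and `D` a nonzero locally nilpotent derivation
of `A`, then the transcendence degree of `A` over `Ker(D)` is `1`: there is a single
element forming a transcendence basis of `A` over `Ker(D)`. -/
theorem stmt_13 {A : Type*} [CommRing A] [IsDomain A] [Algebra ℚ A]
    (D : Derivation ℤ A A) (hln : ∀ x : A, ∃ n : ℕ, (⇑D)^[n] x = 0) (hD : D ≠ 0)
    (B : Subalgebra ℤ A) (hB : ∀ a : A, a ∈ B ↔ D a = 0) :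
    ∃ t : A, IsTranscendenceBasis B (fun _ : Unit => t) := by
  classical
  haveI : CharZero A := aux_charZero
  obtain ⟨x₀, hx₀⟩ : ∃ x, D x ≠ 0 := by
    by_contra h
    push_neg at h
    exact hD (by ext a; simpa using h a)
  set n := Nat.find (hln x₀) with hndef
  have hn : (⇑D)^[n] x₀ = 0 := Nat.find_spec (hln x₀)
  have hn0 : n ≠ 0 := by
    intro h
    rw [h] at hn
    simp only [Function.iterate_zero, id_eq] at hn
    exact hx₀ (by rw [hn, map_zero])
  have hn1 : n ≠ 1 := by
    intro h
    rw [h] at hn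
    simp only [Function.iterate_one] at hn
    exact hx₀ hn
  have hn2 : 2 ≤ n := by omega
  set t := (⇑D)^[n-2] x₀ with htdef
  have hDt : D t = (⇑D)^[n-1] x₀ := by
    rw [htdef, ← Function.iterate_succ_apply' (⇑D) (n-2) x₀]
    congr 1
    omega
  have hDt0 : D t ≠ 0 := by
    rw [hDt]
    exact Nat.find_min (hln x₀) (by omega)
  have hDDt : D (D t) = 0 := by
    rw [hDt, ← Function.iterate_succ_apply' (⇑D) (n-1) x₀]
    rw [show (n - 1).succ = n by omega]
    exact hn
  have hti : AlgebraicIndependent B (fun _ : Unit => t) :=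
    algebraicIndependent_unique_type_iff.2 (aux_trans D B hB t hDt0)
  have halg : ∀ a : A, IsAlgebraic (Algebra.adjoin B (Set.range fun _ : Unit => t)) a := by
    intro a
    rw [show (Set.range fun _ : Unit => t) = ({t} : Set A) from Set.range_const]
    set S := Algebra.adjoin B ({t} : Set A) with hSdef
    obtain ⟨m, hm⟩ := hln a
    have hmem : (D t)^m * a ∈ S := aux_pow D B hB t hDDt m a hm
    have hsS : (D t) ∈ S := by
      have := S.algebraMap_mem (⟨D t, (hB _).2 hDDt⟩ : B)
      exact this
    refine ⟨Polynomial.C (⟨(D t)^m, pow_mem hsS m⟩ : S) * Polynomial.X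
      - Polynomial.C (⟨(D t)^m * a, hmem⟩ : S), ?_, ?_⟩
    · intro h
      have h1 := congrArg (fun q => Polynomial.coeff q 1) h
      simp only [Polynomial.coeff_sub, Polynomial.coeff_C_mul, Polynomial.coeff_X_one,
        mul_one, Polynomial.coeff_C, Polynomial.coeff_zero] at h1
      norm_num at h1
      have h2 := congrArg (Subtype.val) h1
      exact pow_ne_zero m hDt0 h2
    · simp only [map_sub, map_mul, Polynomial.aeval_C, Polynomial.aeval_X]
      show (D t)^m * a - (D t)^m * a = 0
      ring
  refine ⟨t, hti, ?_⟩
  intro s hs hsub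
  have hts : t ∈ s := hsub ⟨default, rfl⟩
  apply Set.Subset.antisymm hsub
  intro a ha
  rw [Set.range_const]
  by_contra hat
  have hat' : a ≠ t := by simpa using hat
  set g : Option Unit → s := fun o => o.elim ⟨a, ha⟩ (fun _ => ⟨t, hts⟩) with hg
  have hginj : Function.Injective g := by
    intro o1 o2 h
    cases o1 <;> cases o2 <;> simp_all [hg]
  have hw : AlgebraicIndependent B (fun o : Option Unit => o.elim a (fun _ : Unit => t)) := by
    have := hs.comp g hginj
    convert this using 1
    funext o
    cases o <;> rfl
  have := (hti.option_iff_transcendental a).1 hw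
  exact this (halg a)
end

section
/- Let R be a domain containing ℚ, A an R-algebra which is an integral domain, and D : A → A a nonzero irreducible locally nilpotent R-derivation such that A = Ker(D)[t] is a polynomial ring in one variable t over Ker(D). Then D has a slice, i.e., there exists s ∈ A with D(s) = 1. -/
set_option synthInstance.maxHeartbeats 400000
set_option maxHeartbeats 1000000


/-- Converse of the slice theorem: if `R` is a domain containing `ℚ`, `A` a domain
which is an `R`-algebra, and `D` a nonzero irreducible locally nilpotent
`R`-derivation of `A` such that `A = Ker(D)[t]` is a polynomial ring in one variable
`t` over `Ker(D)`, then `D` has a slice. -/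
theorem stmt_17 {R A : Type*} [CommRing R] [IsDomain R] [Algebra ℚ R]
    [CommRing A] [IsDomain A] [Algebra R A]
    (D : Derivation R A A) (hln : ∀ x : A, ∃ n : ℕ, (⇑D)^[n] x = 0) (hD : D ≠ 0)
    (hirr : ∀ α : A, (∀ x : A, ∃ y : A, D x = α * y) → IsUnit α)
    (B : Subalgebra R A) (hB : ∀ a : A, a ∈ B ↔ D a = 0)
    (t : A) (ht : Function.Bijective (Polynomial.aeval (R := B) t)) :
    ∃ s : A, D s = 1 := by
  classical
  have hker : ∀ b : B, D (algebraMap B A b) = 0 := fun b => (hB _).mp b.2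
  have key : ∀ p : Polynomial B, D (Polynomial.aeval (R := B) t p)
      = Polynomial.aeval (R := B) t (Polynomial.derivative p) * D t := by
    intro p
    induction p using Polynomial.induction_on with
    | C b => simp [(hB _).mp b.2]
    | add p q hp hq => simp only [map_add, hp, hq]; ring
    | monomial n b ih =>
        simp only [map_mul, map_pow, Polynomial.aeval_C, Polynomial.aeval_X,
          Polynomial.derivative_mul, Polynomial.derivative_C,
          Polynomial.derivative_X_pow, zero_mul, zero_add, map_natCast]
        rw [Derivation.leibniz, Derivation.leibniz_pow, hker b]
        simp only [smul_eq_mul, nsmul_eq_mul]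
        push_cast
        ring
  have hu : IsUnit (D t) := by
    apply hirr
    intro x
    obtain ⟨p, hp⟩ := ht.surjective x
    exact ⟨Polynomial.aeval (R := B) t (Polynomial.derivative p),
      by rw [← hp, key p, mul_comm]⟩
  let e : Polynomial B ≃ₐ[B] A := AlgEquiv.ofBijective (Polynomial.aeval t) ht
  obtain ⟨q, hq⟩ := ht.surjective (D t)
  have hq' : IsUnit q := by
    have h1 : IsUnit (e.symm (D t)) := hu.map e.symm
    have h2 : e.symm (D t) = q := by
      rw [← hq]; exact e.symm_apply_apply q
    rwa [h2] at h1
  obtain ⟨c, hcu, hcq⟩ := Polynomial.isUnit_iff.mp hq'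
  have hDt : D t = algebraMap B A c := by rw [← hq, ← hcq, Polynomial.aeval_C]
  obtain ⟨cu, rfl⟩ := hcu
  refine ⟨algebraMap B A ↑(cu⁻¹) * t, ?_⟩
  rw [D.leibniz, hker, hDt, smul_eq_mul, smul_zero, add_zero, ← map_mul]
  simp
end

section
/- Let R be a domain with fraction field K, A an R-algebra that is a domain, and B₁, B₂ R-subalgebras of A such that B₂ is inert in A and B₁ ⊗_R K = B₂ ⊗_R K inside A ⊗_R K. Then B₁ ⊆ B₂. Consequently, if additionally B₁ is inert in A, then B₁ = B₂. -/
/-- Let `R` be a domain, `A` an `R`-algebra domain, and `B₁, B₂` `R`-subalgebras of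
`A` with `B₂` inert in `A`. If `B₁ ⊗_R K = B₂ ⊗_R K` inside `A ⊗_R K` (i.e. every
element of each `Bᵢ` becomes an element of the other after multiplying by a suitable
nonzero element of `R`), then `B₁ ⊆ B₂`; consequently, if `B₁` is also inert in `A`,
then `B₁ = B₂`. -/
theorem stmt_19 {R A : Type*} [CommRing R] [IsDomain R] [CommRing A] [IsDomain A]
    [Algebra R A] (hinj : Function.Injective (algebraMap R A))
    (B₁ B₂ : Subalgebra R A)
    (hinert₂ : ∀ f g : A, f ≠ 0 → g ≠ 0 → f * g ∈ B₂ → f ∈ B₂ ∧ g ∈ B₂)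
    (h12 : ∀ x ∈ B₁, ∃ r : R, r ≠ 0 ∧ algebraMap R A r * x ∈ B₂)
    (h21 : ∀ x ∈ B₂, ∃ r : R, r ≠ 0 ∧ algebraMap R A r * x ∈ B₁) :
    B₁ ≤ B₂ ∧
      ((∀ f g : A, f ≠ 0 → g ≠ 0 → f * g ∈ B₁ → f ∈ B₁ ∧ g ∈ B₁) → B₁ = B₂) := by
  have key : ∀ (C D : Subalgebra R A),
      (∀ f g : A, f ≠ 0 → g ≠ 0 → f * g ∈ D → f ∈ D ∧ g ∈ D) →
      (∀ x ∈ C, ∃ r : R, r ≠ 0 ∧ algebraMap R A r * x ∈ D) → C ≤ D := by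
    intro C D hD hCD x hx
    rcases eq_or_ne x 0 with rfl | hx0
    · exact D.zero_mem
    · obtain ⟨r, hr, hrx⟩ := hCD x hx
      have hra : algebraMap R A r ≠ 0 := by
        intro h
        exact hr (hinj (by simpa using h))
      exact (hD _ _ hra hx0 hrx).2
  refine ⟨key B₁ B₂ hinert₂ h12, fun hinert₁ => le_antisymm (key B₁ B₂ hinert₂ h12)
    (key B₂ B₁ hinert₁ h21)⟩
end
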